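/- The saddle point matrix 𝒜 = [[A, Bᵀ], [−B, C]] is nonsingular (invertible). -/

import Mathlib

open Matrix

theorem saddle_point_matrix_nonsingular
    (n m : ℕ) (hn : 0 < n) (hm : 0 < m) (hmn : m ≤ n)
    (A : Matrix (Fin n) (Fin n) ℝ) (B : Matrix (Fin m) (Fin n) ℝ)
    (C : Matrix (Fin m) (Fin m) ℝ)
    (hA : A.PosDef) (hC : C.PosSemidef) (hB : B.rank = m) :
    IsUnit (Matrix.fromBlocks A Bᵀ (-B) C) := by
  -- rows of B are linearly independent
  have hrows : LinearIndependent ℝ (fun i ↦ B i) := by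
    rw [linearIndependent_iff_card_eq_finrank_span]
    have := B.rank_eq_finrank_span_row
    rw [hB] at this
    rw [Fintype.card_fin]
    unfold Set.finrank
    exact this
  have hvecMul : Function.Injective B.vecMul := Matrix.vecMul_injective_iff.mpr hrows
  -- kernel of the saddle matrix is trivial
  have key : ∀ z : (Fin n ⊕ Fin m) → ℝ,
      (Matrix.fromBlocks A Bᵀ (-B) C) *ᵥ z = 0 → z = 0 := by
    intro z hz
    set x : Fin n → ℝ := fun i ↦ z (Sum.inl i) with hx
    set y : Fin m → ℝ := fun j ↦ z (Sum.inr j) with hy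
    have hzxy : z = Sum.elim x y := by
      funext i; cases i <;> rfl
    rw [hzxy, Matrix.fromBlocks_mulVec] at hz
    have eq1 : A *ᵥ x + Bᵀ *ᵥ y = 0 := funext fun i ↦ congrFun hz (Sum.inl i)
    have eq2 : (-B) *ᵥ x + C *ᵥ y = 0 := funext fun j ↦ congrFun hz (Sum.inr j)
    have d1 : x ⬝ᵥ (A *ᵥ x) + x ⬝ᵥ (Bᵀ *ᵥ y) = 0 := by
      rw [← dotProduct_add, eq1, dotProduct_zero]
    have d2 : y ⬝ᵥ ((-B) *ᵥ x) + y ⬝ᵥ (C *ᵥ y) = 0 := by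
      rw [← dotProduct_add, eq2, dotProduct_zero]
    have hcross : x ⬝ᵥ (Bᵀ *ᵥ y) = y ⬝ᵥ (B *ᵥ x) := by
      rw [dotProduct_mulVec, vecMul_transpose, dotProduct_comm]
    have hsum : x ⬝ᵥ (A *ᵥ x) + y ⬝ᵥ (C *ᵥ y) = 0 := by
      have : y ⬝ᵥ ((-B) *ᵥ x) = -(x ⬝ᵥ (Bᵀ *ᵥ y)) := by
        rw [hcross, Matrix.neg_mulVec, dotProduct_neg]
      linarith [d1, d2, this]
    have hxA : (0:ℝ) ≤ x ⬝ᵥ (A *ᵥ x) := by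
      simpa using hA.posSemidef.dotProduct_mulVec_nonneg x
    have hyC : (0:ℝ) ≤ y ⬝ᵥ (C *ᵥ y) := by
      simpa using hC.dotProduct_mulVec_nonneg y
    have hx0 : x = 0 := by
      by_contra hx0
      have := hA.dotProduct_mulVec_pos hx0
      simp only [star_trivial] at this
      linarith
    have hBy : Bᵀ *ᵥ y = 0 := by
      rw [hx0] at eq1
      simpa using eq1
    have hy0 : y = 0 := by
      apply hvecMul
      show y ᵥ* B = 0 ᵥ* B
      rw [zero_vecMul, ← Matrix.mulVec_transpose]
      exact hBy
    rw [hzxy, hx0, hy0]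
    funext i; cases i <;> rfl
  -- injectivity of mulVec
  refine Matrix.mulVec_injective_iff_isUnit.mp ?_
  intro a b hab
  have : (Matrix.fromBlocks A Bᵀ (-B) C) *ᵥ (a - b) = 0 := by
    rw [Matrix.mulVec_sub, hab, sub_self]
  have := key _ this
  exact sub_eq_zero.mp this
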